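/- Assume the marked-vertex setup with parameters δ ≥ 1 and k ≥ 1. If u and v are marked vertices and there exist integers a, b ≥ 0 with a + b ≤ k and par^[a](u) = par^[b](v), then one of u, v is an ancestor of the other and all vertices between them are marked: there exists m ≤ a + b such that either par^[m](u) = v and par^[j](u) is marked for every 0 ≤ j ≤ m, or par^[m](v) = u and par^[j](v) is marked for every 0 ≤ j ≤ m. -/

import Mathlib

open Function

/-- `Marked δ k par p v`: there is a period `r` with `1 ≤ r ≤ k` such that the
color sequence `c(v)(i) = p(par^[i](v))` satisfies `c(v)(i) = c(v)(i + r)` for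
every `i ≥ 0` with `i + r < 9k`. -/
def Marked {V : Type*} (δ k : ℕ) (par : V → V) (p : V → Fin δ) (v : V) : Prop :=
  ∃ r : ℕ, 1 ≤ r ∧ r ≤ k ∧ ∀ i : ℕ, i + r < 9 * k → p (par^[i] v) = p (par^[i + r] v)

/-- The color sequence of a vertex. -/
def col {V : Type*} {δ : ℕ} (par : V → V) (p : V → Fin δ) (u : V) (i : ℕ) : Fin δ :=
  p (par^[i] u)

/-- A Fine–Wilf style lemma with generous slack: if `f` has periods `r` and `s`
on `[0, L)` then it has period `gcd r s` on a slightly smaller interval. -/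
lemma fineWilf {α : Type*} : ∀ n (f : ℕ → α) (r s L : ℕ), r + s ≤ n → 1 ≤ r → 1 ≤ s →
    (∀ i, i + r < L → f i = f (i + r)) → (∀ i, i + s < L → f i = f (i + s)) →
    ∀ i, i + Nat.gcd r s + r + s < L → f i = f (i + Nat.gcd r s) := by
  intro n
  induction n with
  | zero => intro f r s L hn hr hs; omega
  | succ n ih =>
    intro f r s L hn hr hs hR hS i hi
    rcases lt_trichotomy r s with h | h | h
    · have hg : Nat.gcd r (s - r) = Nat.gcd r s := Nat.gcd_sub_self_right h.le
      have hS' : ∀ w, w + (s - r) < L - r → f w = f (w + (s - r)) := by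
        intro w hw
        have h1 : f w = f (w + s) := hS w (by omega)
        have h2 : f (w + (s - r)) = f (w + (s - r) + r) := hR _ (by omega)
        have h3 : w + (s - r) + r = w + s := by omega
        rw [h1, h2, h3]
      have hR' : ∀ w, w + r < L - r → f w = f (w + r) := fun w hw => hR w (by omega)
      have := ih f r (s - r) (L - r) (by omega) hr (by omega) hR' hS' i (by rw [hg]; omega)
      rwa [hg] at this
    · subst h
      rw [Nat.gcd_self]
      exact hR i (by omega)
    · have hg : Nat.gcd s (r - s) = Nat.gcd r s := by
        rw [Nat.gcd_sub_self_right h.le, Nat.gcd_comm]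
      have hR' : ∀ w, w + (r - s) < L - s → f w = f (w + (r - s)) := by
        intro w hw
        have h1 : f w = f (w + r) := hR w (by omega)
        have h2 : f (w + (r - s)) = f (w + (r - s) + s) := hS _ (by omega)
        have h3 : w + (r - s) + s = w + r := by omega
        rw [h1, h2, h3]
      have hS' : ∀ w, w + s < L - s → f w = f (w + s) := fun w hw => hS w (by omega)
      have := ih f s (r - s) (L - s) (by omega) hs (by omega) hS' hR' i (by rw [hg]; omega)
      rwa [hg] at this

/-- Main auxiliary lemma: the case `b ≤ a`. -/
lemma stmt13_aux {V : Type*} (δ k : ℕ) (hk : 1 ≤ k)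
    (par : V → V) (p : V → Fin δ)
    (hport : ∀ u v : V, u ≠ v → par u = par v → p u ≠ p v)
    (u v : V) (hu : Marked δ k par p u) (hv : Marked δ k par p v)
    (a b : ℕ) (hba : b ≤ a) (hak : a ≤ k)
    (hmeet : par^[a] u = par^[b] v) :
    par^[a - b] u = v ∧ ∀ j ≤ a - b, Marked δ k par p (par^[j] u) := by
  obtain ⟨r, hr1, hrk, hru⟩ := hu
  obtain ⟨s, hs1, hsk, hsv⟩ := hv
  have hru' : ∀ i, i + r < 9 * k → col par p u i = col par p u (i + r) := hru
  have hsv' : ∀ i, i + s < 9 * k → col par p v i = col par p v (i + s) := hsv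
  have hg1 : 1 ≤ Nat.gcd r s := Nat.gcd_pos_of_pos_left s hr1
  have hgr : Nat.gcd r s ≤ r := Nat.gcd_le_left s hr1
  have hgs : Nat.gcd r s ≤ s := Nat.gcd_le_right r hs1
  have hgdvd : Nat.gcd r s ∣ s := Nat.gcd_dvd_right r s
  have htail : ∀ w, col par p u (a + w) = col par p v (b + w) := by
    intro w
    show p (par^[a + w] u) = p (par^[b + w] v)
    rw [add_comm a w, add_comm b w, Function.iterate_add_apply,
      Function.iterate_add_apply, hmeet]
  -- Fine–Wilf on the common tail
  have hfw := fineWilf (r + s) (fun w => col par p u (a + w)) r s (8 * k) le_rfl hr1 hs1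
    (fun w hw => by
      show col par p u (a + w) = col par p u (a + (w + r))
      have := hru' (a + w) (by omega)
      rwa [show a + w + r = a + (w + r) from by omega] at this)
    (fun w hw => by
      show col par p u (a + w) = col par p u (a + (w + s))
      calc col par p u (a + w) = col par p v (b + w) := htail w
        _ = col par p v (b + w + s) := hsv' _ (by omega)
        _ = col par p v (b + (w + s)) := by rw [show b + w + s = b + (w + s) from by omega]
        _ = col par p u (a + (w + s)) := (htail (w + s)).symm)
  have hFW : ∀ w, w + Nat.gcd r s + r + s < 8 * k →
      col par p u (a + w) = col par p u (a + (w + Nat.gcd r s)) := fun w hw => hfw w hw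
  -- gcd-period of the color of u near the root, tail part
  have hAt : ∀ i, a ≤ i → i + Nat.gcd r s < 3 * k →
      col par p u i = col par p u (i + Nat.gcd r s) := by
    intro i h1 h2
    have := hFW (i - a) (by omega)
    rwa [show a + (i - a) = i from by omega,
      show a + (i - a + Nat.gcd r s) = i + Nat.gcd r s from by omega] at this
  -- gcd-period of the color of v near the root, tail part
  have hBt : ∀ i, b ≤ i → i + Nat.gcd r s < 3 * k →
      col par p v i = col par p v (i + Nat.gcd r s) := by
    intro i h1 h2
    have h3 := hFW (i - b) (by omega)
    have h4 := htail (i - b)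
    have h5 := htail (i - b + Nat.gcd r s)
    rw [show b + (i - b) = i from by omega] at h4
    rw [show b + (i - b + Nat.gcd r s) = i + Nat.gcd r s from by omega] at h5
    rw [h4, h5] at h3
    exact h3
  -- gcd-period of the color of u everywhere on [0, 3k)
  have hAu : ∀ j i, a ≤ i + j → i + Nat.gcd r s < 3 * k →
      col par p u i = col par p u (i + Nat.gcd r s) := by
    intro j
    induction j with
    | zero => intro i h1 h2; exact hAt i (by omega) h2
    | succ j ihj =>
      intro i h1 h2
      by_cases hia : a ≤ i
      · exact hAt i hia h2
      · push_neg at hia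
        have e1 : col par p u i = col par p u (i + r) := hru' i (by omega)
        have e2 : col par p u (i + Nat.gcd r s) = col par p u (i + Nat.gcd r s + r) :=
          hru' (i + Nat.gcd r s) (by omega)
        have e3 : col par p u (i + r) = col par p u (i + r + Nat.gcd r s) :=
          ihj (i + r) (by omega) (by omega)
        rw [e1, e3, show i + r + Nat.gcd r s = i + Nat.gcd r s + r from by omega]
        exact e2.symm
  have hAu' : ∀ i, i + Nat.gcd r s < 3 * k →
      col par p u i = col par p u (i + Nat.gcd r s) := fun i h2 => hAu a i (by omega) h2
  -- gcd-period of the color of v everywhere on [0, 3k)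
  have hBv : ∀ j i, b ≤ i + j → i + Nat.gcd r s < 3 * k →
      col par p v i = col par p v (i + Nat.gcd r s) := by
    intro j
    induction j with
    | zero => intro i h1 h2; exact hBt i (by omega) h2
    | succ j ihj =>
      intro i h1 h2
      by_cases hib : b ≤ i
      · exact hBt i hib h2
      · push_neg at hib
        have e1 : col par p v i = col par p v (i + s) := hsv' i (by omega)
        have e2 : col par p v (i + Nat.gcd r s) = col par p v (i + Nat.gcd r s + s) :=
          hsv' (i + Nat.gcd r s) (by omega)
        have e3 : col par p v (i + s) = col par p v (i + s + Nat.gcd r s) :=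
          ihj (i + s) (by omega) (by omega)
        rw [e1, e3, show i + s + Nat.gcd r s = i + Nat.gcd r s + s from by omega]
        exact e2.symm
  have hBv' : ∀ i, i + Nat.gcd r s < 3 * k →
      col par p v i = col par p v (i + Nat.gcd r s) := fun i h2 => hBv b i (by omega) h2
  -- iterated gcd-period for u
  have hAum : ∀ t i, i + Nat.gcd r s * t < 3 * k →
      col par p u i = col par p u (i + Nat.gcd r s * t) := by
    intro t
    induction t with
    | zero => intro i _; simp
    | succ t iht =>
      intro i h
      rw [Nat.mul_succ] at h ⊢
      have e1 : col par p u i = col par p u (i + Nat.gcd r s) := hAu' i (by omega)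
      have e2 := iht (i + Nat.gcd r s) (by omega)
      rw [e1, e2, show i + Nat.gcd r s + Nat.gcd r s * t
        = i + (Nat.gcd r s * t + Nat.gcd r s) from by omega]
  -- colors below the meeting point agree
  have hcol : ∀ j i, b ≤ i + j → i ≤ b → col par p u (a - b + i) = col par p v i := by
    intro j
    induction j with
    | zero =>
      intro i h1 h2
      rw [show a - b + i = a + 0 from by omega, show i = b + 0 from by omega]
      exact htail 0
    | succ j ihj =>
      intro i h1 h2
      by_cases hib : b ≤ i
      · rw [show a - b + i = a + 0 from by omega, show i = b + 0 from by omega]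
        exact htail 0
      · push_neg at hib
        have e1 : col par p u (a - b + i) = col par p u (a - b + i + Nat.gcd r s) :=
          hAu' _ (by omega)
        have e2 : col par p v i = col par p v (i + Nat.gcd r s) := hBv' i (by omega)
        by_cases hgb : i + Nat.gcd r s ≤ b
        · have e3 := ihj (i + Nat.gcd r s) (by omega) hgb
          rw [e1, show a - b + i + Nat.gcd r s = a - b + (i + Nat.gcd r s) from by omega,
            e3]
          exact e2.symm
        · -- i + gcd is past b : both sides lie in the common tail
          push_neg at hgb
          have h4 := htail (i + Nat.gcd r s - b)
          rw [show a + (i + Nat.gcd r s - b) = a - b + i + Nat.gcd r s from by omega,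
            show b + (i + Nat.gcd r s - b) = i + Nat.gcd r s from by omega] at h4
          rw [e1, h4]
          exact e2.symm
  have hcol' : ∀ i ≤ b, col par p u (a - b + i) = col par p v i :=
    fun i hi => hcol b i (by omega) hi
  -- descend from the meeting point
  have hdesc : ∀ t j, j + t = b → par^[a - b + j] u = par^[j] v := by
    intro t
    induction t with
    | zero =>
      intro j hj
      rw [show a - b + j = a from by omega, show j = b from by omega]
      exact hmeet
    | succ t iht =>
      intro j hj
      have hnext := iht (j + 1) (by omega)
      have hx : par (par^[a - b + j] u) = par^[a - b + (j + 1)] u := by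
        rw [show a - b + (j + 1) = (a - b + j) + 1 from by omega]
        exact (Function.iterate_succ_apply' par _ u).symm
      have hy : par (par^[j] v) = par^[j + 1] v :=
        (Function.iterate_succ_apply' par _ v).symm
      have hpar : par (par^[a - b + j] u) = par (par^[j] v) := by
        rw [hx, hy, hnext]
      have hp : p (par^[a - b + j] u) = p (par^[j] v) := hcol' j (by omega)
      by_contra hne
      exact hport _ _ hne hpar hp
  have hroot : par^[a - b] u = v := by
    have := hdesc b 0 (by omega)
    simpa using this
  refine ⟨hroot, ?_⟩
  -- every vertex between u and the meeting point is marked with period s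
  intro j hj
  refine ⟨s, hs1, hsk, ?_⟩
  intro i hi
  have h1 : par^[i] (par^[j] u) = par^[i + j] u := (Function.iterate_add_apply par i j u).symm
  have h2 : par^[i + s] (par^[j] u) = par^[i + s + j] u :=
    (Function.iterate_add_apply par (i + s) j u).symm
  rw [h1, h2]
  show col par p u (i + j) = col par p u (i + s + j)
  by_cases hcase : a ≤ i + j
  · have h3 := htail (i + j - a)
    have h4 := htail (i + j - a + s)
    rw [show a + (i + j - a) = i + j from by omega] at h3
    rw [show a + (i + j - a + s) = i + s + j from by omega] at h4
    have h5 : col par p v (b + (i + j - a)) = col par p v (b + (i + j - a) + s) :=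
      hsv' _ (by omega)
    rw [h3, h5, show b + (i + j - a) + s = b + (i + j - a + s) from by omega]
    exact h4.symm
  · push_neg at hcase
    have hs' : Nat.gcd r s * (s / Nat.gcd r s) = s := Nat.mul_div_cancel' hgdvd
    have := hAum (s / Nat.gcd r s) (i + j) (by rw [hs']; omega)
    rw [hs'] at this
    rw [show i + s + j = i + j + s from by omega]
    exact this

/-- in the marked-vertex setup, if `u` and `v` are marked and
`par^[a](u) = par^[b](v)` for some `a, b ≥ 0` with `a + b ≤ k`, then one of
`u, v` is an ancestor of the other and all vertices between them are marked. -/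
theorem stmt13 {V : Type*} (δ k : ℕ) (hδ : 1 ≤ δ) (hk : 1 ≤ k)
    (par : V → V) (p : V → Fin δ)
    (hacyc : ∀ v : V, ∀ n : ℕ, 1 ≤ n → par^[n] v ≠ v)
    (hport : ∀ u v : V, u ≠ v → par u = par v → p u ≠ p v)
    (u v : V) (hu : Marked δ k par p u) (hv : Marked δ k par p v)
    (a b : ℕ) (hab : a + b ≤ k) (hmeet : par^[a] u = par^[b] v) :
    ∃ m : ℕ, m ≤ a + b ∧
      ((par^[m] u = v ∧ ∀ j ≤ m, Marked δ k par p (par^[j] u)) ∨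
       (par^[m] v = u ∧ ∀ j ≤ m, Marked δ k par p (par^[j] v))) := by
  rcases le_total b a with h | h
  · obtain ⟨h1, h2⟩ := stmt13_aux δ k hk par p hport u v hu hv a b h (by omega) hmeet
    exact ⟨a - b, by omega, Or.inl ⟨h1, h2⟩⟩
  · obtain ⟨h1, h2⟩ := stmt13_aux δ k hk par p hport v u hv hu b a h (by omega) hmeet.symm
    exact ⟨b - a, by omega, Or.inr ⟨h1, h2⟩⟩
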